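/- There exist topological dynamical systems (X, T) and (Y, S), with π : X × Y → Y the projection onto the second coordinate (a factor map from (X × Y, T × S) to (Y, S)), and a continuous function f ∈ C(X × Y), such that α(f) = β(f) = γ(f) = −1 while δ(f) = 0; in particular α(f) = β(f) = γ(f) < δ(f). Concretely one may take X = {−1, +1} with T the identity, Y = ℤ ∪ {−∞, +∞} the two-point compactification of ℤ with S the map y ↦ y + 1 on ℤ fixing ±∞, and f(x, y) = −sgn(x·y) (with f(x, y) = 0 when y = 0). -/

import Mathlib

/-- A topological dynamical system: a compact metrizable space (with its Borel
σ-algebra) together with a homeomorphism of it. -/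
structure TDS where
  carrier : Type
  [topo : TopologicalSpace carrier]
  [comp : CompactSpace carrier]
  [metr : TopologicalSpace.MetrizableSpace carrier]
  [meas : MeasurableSpace carrier]
  [borel : BorelSpace carrier]
  homeo : carrier ≃ₜ carrier

attribute [instance] TDS.topo TDS.comp TDS.metr TDS.meas TDS.borel

open MeasureTheory Filter Topology
open scoped ENNReal NNReal

noncomputable section

/-- Birkhoff average `A_k f(x, y) = (1/k) Σ_{j<k} f(T^j x, S^j y)`. -/
def birk2 {X Y : Type*} (T : X → X) (S : Y → Y) (f : X × Y → ℝ) (k : ℕ) (x : X) (y : Y) : ℝ :=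
  (k : ℝ)⁻¹ * ∑ j ∈ Finset.range k, f ((Prod.map T S)^[j] (x, y))

/-- The set of invariant Borel probability measures of a map. -/
def invMeas {Z : Type*} [MeasurableSpace Z] (U : Z → Z) : Set (ProbabilityMeasure Z) :=
  {μ | μ.toMeasure.map U = μ.toMeasure}

/-- `ψ_f(ν) = min { ∫ f dλ : λ ∈ M_{T×S}(X × Y), (π_Y)_* λ = ν }`. -/
def psi2 {X Y : Type*} [MeasurableSpace X] [MeasurableSpace Y]
    (T : X → X) (S : Y → Y) (f : X × Y → ℝ) (ν : ProbabilityMeasure Y) : ℝ :=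
  sInf {r | ∃ lam ∈ invMeas (Prod.map T S), lam.toMeasure.map Prod.snd = ν.toMeasure ∧
    r = ∫ p, f p ∂lam.toMeasure}

/-- `α(f) = sup_{ν ∈ M_S(Y)} ψ_f(ν)`. -/
def alpha2 {X Y : Type*} [MeasurableSpace X] [MeasurableSpace Y]
    (T : X → X) (S : Y → Y) (f : X × Y → ℝ) : ℝ :=
  sSup {r | ∃ ν ∈ invMeas S, r = psi2 T S f ν}

/-- `R_f`: points `(x, y)` whose Birkhoff averages converge. -/
def reg2 {X Y : Type*} (T : X → X) (S : Y → Y) (f : X × Y → ℝ) : Set (X × Y) :=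
  {p | ∃ L : ℝ, Tendsto (fun k : ℕ => birk2 T S f k p.1 p.2) atTop (𝓝 L)}

/-- `β(f) = sup_{y ∈ π_Y(R_f)} inf_{(x,y) ∈ R_f} lim_k A_k f(x, y)`. -/
def beta2 {X Y : Type*} (T : X → X) (S : Y → Y) (f : X × Y → ℝ) : ℝ :=
  sSup {r | ∃ y : Y, (∃ x : X, (x, y) ∈ reg2 T S f) ∧
    r = sInf {L | ∃ x : X, (x, y) ∈ reg2 T S f ∧
      Tendsto (fun k : ℕ => birk2 T S f k x y) atTop (𝓝 L)}}

/-- `γ(f) = sup_{y ∈ Y} inf_{x ∈ X} limsup_k A_k f(x, y)`. -/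
def gamma2 {X Y : Type*} (T : X → X) (S : Y → Y) (f : X × Y → ℝ) : ℝ :=
  ⨆ y : Y, ⨅ x : X, limsup (fun k : ℕ => birk2 T S f k x y) atTop

/-- `δ(f) = limsup_k max_{y ∈ Y} min_{x ∈ X} A_k f(x, y)`. -/
def delta2 {X Y : Type*} (T : X → X) (S : Y → Y) (f : X × Y → ℝ) : ℝ :=
  limsup (fun k : ℕ => ⨆ y : Y, ⨅ x : X, birk2 T S f k x y) atTop

namespace Stmt5Aux

/-! ### The real clamp function -/

def gR (r : ℝ) : ℝ := max (-1) (min 1 r)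

lemma gR_of_one_le {r : ℝ} (h : 1 ≤ r) : gR r = 1 := by
  rw [gR, min_eq_left h, max_eq_right (by norm_num)]

lemma gR_of_le_neg_one {r : ℝ} (h : r ≤ -1) : gR r = -1 := by
  rw [gR, min_eq_right (by linarith), max_eq_left h]

lemma gR_of_mem {r : ℝ} (h1 : -1 ≤ r) (h2 : r ≤ 1) : gR r = r := by
  rw [gR, min_eq_right h2, max_eq_right h1]

lemma neg_one_le_gR (r : ℝ) : -1 ≤ gR r := le_max_left _ _

lemma gR_le_one (r : ℝ) : gR r ≤ 1 := max_le (by norm_num) (min_le_left _ _)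

lemma gR_neg (r : ℝ) : gR (-r) = -gR r := by
  rcases le_total r (-1) with h | h
  · rw [gR_of_le_neg_one h, gR_of_one_le (by linarith)]; ring
  rcases le_total 1 r with h' | h'
  · rw [gR_of_one_le h', gR_of_le_neg_one (by linarith)]
  · rw [gR_of_mem h (by linarith), gR_of_mem (by linarith) (by linarith)]

/-! ### The EReal clamp and `g` -/

def gE (y : EReal) : EReal := max (-1) (min 1 y)

lemma coe_neg_one : ((-1 : ℝ) : EReal) = (-1 : EReal) := by
  rw [EReal.coe_neg, EReal.coe_one]

lemma gE_coe (r : ℝ) : gE (r : EReal) = ((gR r : ℝ) : EReal) := by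
  have hmin : ((min 1 r : ℝ) : EReal) = min ((1:ℝ):EReal) (r : EReal) :=
    EReal.coe_strictMono.monotone.map_min
  have hmax : ((max (-1) (min 1 r) : ℝ) : EReal)
      = max ((-1:ℝ):EReal) ((min 1 r : ℝ) : EReal) :=
    EReal.coe_strictMono.monotone.map_max
  rw [gR, hmax, hmin, EReal.coe_one, coe_neg_one, gE]

lemma gE_bot : gE ⊥ = (-1 : EReal) := by
  rw [gE, min_eq_right bot_le, max_eq_left bot_le]

lemma neg_one_le_one_E : (-1 : EReal) ≤ 1 := by
  rw [← coe_neg_one, ← EReal.coe_one]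
  exact EReal.coe_le_coe_iff.mpr (by norm_num)

lemma gE_top : gE ⊤ = (1 : EReal) := by
  rw [gE, min_eq_left le_top, max_eq_right neg_one_le_one_E]

def g (y : EReal) : ℝ := (gE y).toReal

lemma g_coe (r : ℝ) : g (r : EReal) = gR r := by rw [g, gE_coe, EReal.toReal_coe]

lemma g_bot : g ⊥ = -1 := by rw [g, gE_bot, ← coe_neg_one, EReal.toReal_coe]

lemma g_top : g ⊤ = 1 := by rw [g, gE_top, EReal.toReal_one]

lemma neg_one_le_g (y : EReal) : -1 ≤ g y := by
  induction y using EReal.rec with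
  | bot => rw [g_bot]
  | coe r => rw [g_coe]; exact neg_one_le_gR r
  | top => rw [g_top]; norm_num

lemma g_le_one (y : EReal) : g y ≤ 1 := by
  induction y using EReal.rec with
  | bot => rw [g_bot]; norm_num
  | coe r => rw [g_coe]; exact gR_le_one r
  | top => rw [g_top]

lemma g_continuous : Continuous g := by
  have h1 : Continuous gE := continuous_const.max (continuous_const.min continuous_id)
  have h2 : ∀ y, gE y ∈ ({⊥, ⊤}ᶜ : Set EReal) := by
    intro y
    have hlb : (-1 : EReal) ≤ gE y := le_max_left _ _
    have hub : gE y ≤ 1 := max_le neg_one_le_one_E (min_le_left _ _)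
    simp only [Set.mem_compl_iff, Set.mem_insert_iff, Set.mem_singleton_iff, not_or]
    constructor
    · intro h
      rw [h] at hlb
      exact absurd hlb (not_le.mpr (coe_neg_one ▸ EReal.bot_lt_coe (-1)))
    · intro h
      rw [h] at hub
      exact absurd hub (not_le.mpr (EReal.coe_one ▸ EReal.coe_lt_top 1))
  exact EReal.continuousOn_toReal.comp_continuous h1 h2

/-! ### The systems -/

def cB (b : Bool) : ℝ := if b then 1 else -1

def fF : Bool × EReal → ℝ := fun p => cB p.1 * g p.2

lemma fF_continuous : Continuous fF := by
  have hc : Continuous cB := continuous_of_discreteTopology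
  exact (hc.comp continuous_fst).mul (g_continuous.comp continuous_snd)

lemma neg_one_le_fF (p : Bool × EReal) : -1 ≤ fF p := by
  rcases p with ⟨b, y⟩
  cases b <;> simp only [fF, cB, if_true, if_false, Bool.false_eq_true]
  · have := g_le_one y; nlinarith
  · have := neg_one_le_g y; nlinarith

lemma abs_fF_le_one (p : Bool × EReal) : ‖fF p‖ ≤ 1 := by
  rcases p with ⟨b, y⟩
  rw [Real.norm_eq_abs, abs_le]
  refine ⟨neg_one_le_fF _, ?_⟩
  cases b <;> simp only [fF, cB, if_true, if_false, Bool.false_eq_true]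
  · have := neg_one_le_g y; nlinarith
  · have := g_le_one y; nlinarith

def Th : Bool ≃ₜ Bool := Homeomorph.refl Bool

def Se : EReal ≃o EReal := by
  refine StrictMono.orderIsoOfSurjective (fun y => y + 1) ?_ ?_
  · intro a b h
    have := EReal.add_lt_add_right_coe h 1
    simpa [EReal.coe_one] using this
  · intro y
    refine ⟨y - 1, ?_⟩
    induction y using EReal.rec with
    | bot => show ⊥ - 1 + 1 = ⊥; rw [EReal.bot_sub, EReal.bot_add]
    | coe r =>
        show (r : EReal) - 1 + 1 = (r : EReal)
        rw [← EReal.coe_one, ← EReal.coe_sub, ← EReal.coe_add]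
        norm_num
    | top => show ⊤ - 1 + 1 = ⊤; rw [← EReal.coe_one, EReal.top_sub_coe, EReal.top_add_coe]

def Sh : EReal ≃ₜ EReal := Se.toHomeomorph

lemma Sh_apply (y : EReal) : Sh y = y + 1 := rfl

lemma Sh_coe (r : ℝ) : Sh (r : EReal) = ((r + 1 : ℝ) : EReal) := by
  rw [Sh_apply, ← EReal.coe_one, ← EReal.coe_add]

lemma Sh_bot : Sh ⊥ = ⊥ := by rw [Sh_apply, EReal.bot_add]

lemma Sh_top : Sh ⊤ = ⊤ := by rw [Sh_apply, ← EReal.coe_one, EReal.top_add_coe]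

lemma Sit_coe (j : ℕ) (r : ℝ) : (⇑Sh)^[j] (r : EReal) = ((r + j : ℝ) : EReal) := by
  induction j with
  | zero => simp
  | succ n ih =>
      rw [Function.iterate_succ_apply', ih, Sh_coe]
      congr 1
      push_cast; ring

lemma Sit_bot (j : ℕ) : (⇑Sh)^[j] (⊥ : EReal) = ⊥ := Function.iterate_fixed Sh_bot j

lemma Sit_top (j : ℕ) : (⇑Sh)^[j] (⊤ : EReal) = ⊤ := Function.iterate_fixed Sh_top j

/-! ### Birkhoff sums -/

def avg (k : ℕ) (y : EReal) : ℝ := (k : ℝ)⁻¹ * ∑ j ∈ Finset.range k, g ((⇑Sh)^[j] y)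

lemma birk_eq (k : ℕ) (x : Bool) (y : EReal) :
    birk2 (⇑Th) (⇑Sh) fF k x y = cB x * avg k y := by
  rw [birk2, avg]
  have h : ∀ j : ℕ, fF ((Prod.map (⇑Th) (⇑Sh))^[j] (x, y)) = cB x * g ((⇑Sh)^[j] y) := by
    intro j
    rw [Prod.map_iterate]
    have hT : (⇑Th)^[j] x = x := Function.iterate_fixed rfl j
    simp only [Prod.map_apply, fF, hT]
  simp only [h]
  rw [← Finset.mul_sum]
  ring

def L (y : EReal) : ℝ := if y = ⊥ then -1 else 1

lemma tendsto_avg (y : EReal) : Tendsto (fun k => avg k y) atTop (𝓝 (L y)) := by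
  have : Tendsto (fun j : ℕ => g ((⇑Sh)^[j] y)) atTop (𝓝 (L y)) := by
    induction y using EReal.rec with
    | bot =>
        simp only [Sit_bot, g_bot, L, if_pos rfl]
        exact tendsto_const_nhds
    | coe r =>
        have hL : L (r : EReal) = 1 := if_neg (by simp)
        rw [hL]
        apply Tendsto.congr' _ tendsto_const_nhds
        filter_upwards [eventually_ge_atTop ⌈1 - r⌉₊] with j hj
        have : (1 : ℝ) - r ≤ j := le_trans (Nat.le_ceil _) (by exact_mod_cast hj)
        rw [Sit_coe, g_coe, gR_of_one_le (by linarith)]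
    | top =>
        have hL : L (⊤ : EReal) = 1 := if_neg (by simp)
        simp only [Sit_top, g_top, hL]
        exact tendsto_const_nhds
  exact this.cesaro

lemma tendsto_birk (x : Bool) (y : EReal) :
    Tendsto (fun k => birk2 (⇑Th) (⇑Sh) fF k x y) atTop (𝓝 (cB x * L y)) := by
  simp only [birk_eq]
  exact (tendsto_avg y).const_mul _

lemma iInf_bool (v : Bool → ℝ) : (⨅ b, v b) = min (v false) (v true) := by
  apply le_antisymm
  · exact le_min (ciInf_le (Finite.bddBelow_range v) false)
      (ciInf_le (Finite.bddBelow_range v) true)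
  · apply le_ciInf
    intro b
    cases b
    · exact min_le_left _ _
    · exact min_le_right _ _

lemma min_cB_mul (t : ℝ) : min (cB false * t) (cB true * t) = -|t| := by
  simp only [cB, if_true, if_false, Bool.false_eq_true, one_mul, neg_one_mul]
  rcases le_total t 0 with h | h
  · rw [min_eq_right (by linarith), abs_of_nonpos h, neg_neg]
  · rw [min_eq_left (by linarith), abs_of_nonneg h]

lemma abs_L (y : EReal) : |L y| = 1 := by
  rw [L]; split_ifs <;> norm_num

end Stmt5Aux
namespace Stmt5Aux

/-! ### gamma -/

lemma gamma_eq : gamma2 (⇑Th) (⇑Sh) fF = -1 := by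
  have h : ∀ y : EReal, (⨅ x : Bool, limsup (fun k : ℕ => birk2 (⇑Th) (⇑Sh) fF k x y) atTop)
      = -1 := by
    intro y
    have hls : ∀ x : Bool, limsup (fun k : ℕ => birk2 (⇑Th) (⇑Sh) fF k x y) atTop
        = cB x * L y := fun x => (tendsto_birk x y).limsup_eq
    rw [iInf_bool]
    simp only [hls]
    rw [min_cB_mul, abs_L]
  rw [gamma2]
  simp only [h]
  exact ciSup_const

/-! ### beta -/

lemma reg_mem (x : Bool) (y : EReal) : (x, y) ∈ reg2 (⇑Th) (⇑Sh) fF :=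
  ⟨cB x * L y, tendsto_birk x y⟩

lemma limit_set (y : EReal) :
    {L' : ℝ | ∃ x : Bool, (x, y) ∈ reg2 (⇑Th) (⇑Sh) fF ∧
      Tendsto (fun k : ℕ => birk2 (⇑Th) (⇑Sh) fF k x y) atTop (𝓝 L')}
    = {cB false * L y, cB true * L y} := by
  ext L'
  simp only [Set.mem_setOf_eq, Set.mem_insert_iff, Set.mem_singleton_iff]
  constructor
  · rintro ⟨x, -, hx⟩
    have := tendsto_nhds_unique hx (tendsto_birk x y)
    cases x
    · exact Or.inl this
    · exact Or.inr this
  · rintro (rfl | rfl)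
    · exact ⟨false, reg_mem false y, tendsto_birk false y⟩
    · exact ⟨true, reg_mem true y, tendsto_birk true y⟩

lemma sInf_limits (y : EReal) :
    sInf {L' : ℝ | ∃ x : Bool, (x, y) ∈ reg2 (⇑Th) (⇑Sh) fF ∧
      Tendsto (fun k : ℕ => birk2 (⇑Th) (⇑Sh) fF k x y) atTop (𝓝 L')} = -1 := by
  rw [limit_set, csInf_pair, min_cB_mul, abs_L]

lemma beta_eq : beta2 (⇑Th) (⇑Sh) fF = -1 := by
  rw [beta2]
  have hset : {r : ℝ | ∃ y : EReal, (∃ x : Bool, (x, y) ∈ reg2 (⇑Th) (⇑Sh) fF) ∧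
      r = sInf {L' | ∃ x : Bool, (x, y) ∈ reg2 (⇑Th) (⇑Sh) fF ∧
        Tendsto (fun k : ℕ => birk2 (⇑Th) (⇑Sh) fF k x y) atTop (𝓝 L')}}
      = {(-1 : ℝ)} := by
    ext r
    simp only [Set.mem_setOf_eq, Set.mem_singleton_iff]
    constructor
    · rintro ⟨y, -, rfl⟩
      exact sInf_limits y
    · rintro rfl
      exact ⟨⊤, ⟨true, reg_mem true ⊤⟩, (sInf_limits ⊤).symm⟩
  rw [hset, csSup_singleton]

/-! ### delta -/

lemma avg_center (k : ℕ) : avg k ((((1 - (k:ℝ)) / 2 : ℝ)) : EReal) = 0 := by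
  rcases Nat.eq_zero_or_pos k with rfl | hk
  · simp [avg]
  set m : ℝ := (1 - (k:ℝ)) / 2 with hm
  have hsum : ∑ j ∈ Finset.range k, gR (m + j) = 0 := by
    have hrefl := Finset.sum_range_reflect (fun j : ℕ => gR (m + j)) k
    have hterm : ∀ j ∈ Finset.range k, gR (m + ((k - 1 - j : ℕ) : ℝ)) = -gR (m + j) := by
      intro j hj
      rw [Finset.mem_range] at hj
      have hj' : j ≤ k - 1 := Nat.le_sub_one_of_lt hj
      have hcast : ((k - 1 - j : ℕ) : ℝ) = (k : ℝ) - 1 - j := by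
        rw [Nat.cast_sub hj', Nat.cast_sub hk]
        simp
      rw [hcast]
      have harg : m + ((k : ℝ) - 1 - j) = -(m + j) := by
        rw [hm]; ring
      rw [harg, gR_neg]
    have h1 : ∑ j ∈ Finset.range k, gR (m + ((k - 1 - j : ℕ) : ℝ))
        = ∑ j ∈ Finset.range k, (-gR (m + j)) := Finset.sum_congr rfl hterm
    rw [hrefl] at h1
    rw [Finset.sum_neg_distrib] at h1
    linarith
  rw [avg]
  have : ∀ j ∈ Finset.range k, g ((⇑Sh)^[j] ((m : ℝ) : EReal)) = gR (m + j) := by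
    intro j _
    rw [Sit_coe, g_coe]
  rw [Finset.sum_congr rfl this, hsum, mul_zero]

lemma inner_birk (k : ℕ) (y : EReal) :
    (⨅ x : Bool, birk2 (⇑Th) (⇑Sh) fF k x y) = -|avg k y| := by
  rw [iInf_bool]
  simp only [birk_eq]
  exact min_cB_mul _

lemma sup_inner (k : ℕ) :
    (⨆ y : EReal, ⨅ x : Bool, birk2 (⇑Th) (⇑Sh) fF k x y) = 0 := by
  apply le_antisymm
  · apply ciSup_le
    intro y
    show (⨅ x : Bool, birk2 (⇑Th) (⇑Sh) fF k x y) ≤ 0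
    rw [inner_birk]
    simp [abs_nonneg]
  · have h0 : (⨅ x : Bool, birk2 (⇑Th) (⇑Sh) fF k x ((((1 - (k:ℝ)) / 2 : ℝ)) : EReal)) = 0 := by
      rw [inner_birk, avg_center]
      simp
    rw [← h0]
    apply le_ciSup (f := fun y : EReal => ⨅ x : Bool, birk2 (⇑Th) (⇑Sh) fF k x y)
    refine ⟨0, ?_⟩
    rintro _ ⟨y, rfl⟩
    show (⨅ x : Bool, birk2 (⇑Th) (⇑Sh) fF k x y) ≤ 0
    rw [inner_birk]
    simp [abs_nonneg]

lemma delta_eq : delta2 (⇑Th) (⇑Sh) fF = 0 := by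
  rw [delta2]
  have : (fun k : ℕ => ⨆ y : EReal, ⨅ x : Bool, birk2 (⇑Th) (⇑Sh) fF k x y)
      = fun _ => (0 : ℝ) := funext sup_inner
  rw [this, limsup_const]

end Stmt5Aux
namespace Stmt5Aux

/-! ### alpha: invariant measures on EReal -/

def A (n : ℤ) : Set EReal := Set.Ico (((n : ℝ)) : EReal) ((((n : ℝ) + 1 : ℝ)) : EReal)

lemma measurable_A (n : ℤ) : MeasurableSet (A n) := measurableSet_Ico

lemma Sh_preimage_Ico (a b : ℝ) :
    (⇑Sh) ⁻¹' Set.Ico (((a + 1 : ℝ)) : EReal) (((b + 1 : ℝ)) : EReal)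
      = Set.Ico ((a : ℝ) : EReal) ((b : ℝ) : EReal) := by
  ext y
  have ha : (((a + 1 : ℝ)) : EReal) = Sh (a : EReal) := (Sh_coe a).symm
  have hb : (((b + 1 : ℝ)) : EReal) = Sh (b : EReal) := (Sh_coe b).symm
  simp only [Set.mem_preimage, Set.mem_Ico, ha, hb]
  constructor
  · rintro ⟨h1, h2⟩
    exact ⟨Se.le_iff_le.mp h1, Se.lt_iff_lt.mp h2⟩
  · rintro ⟨h1, h2⟩
    exact ⟨Se.le_iff_le.mpr h1, Se.lt_iff_lt.mpr h2⟩

lemma Sh_preimage_A (n : ℤ) : (⇑Sh) ⁻¹' A (n + 1) = A n := by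
  have hc : (((n + 1 : ℤ) : ℝ)) = (n : ℝ) + 1 := by push_cast; ring
  rw [A, A, hc]
  exact Sh_preimage_Ico (n : ℝ) ((n : ℝ) + 1)

lemma disjoint_A : Pairwise (Function.onFun Disjoint A) := by
  intro m n hmn
  have key : ∀ a b : ℤ, a + 1 ≤ b → Disjoint (A a) (A b) := by
    intro a b hab
    apply Set.disjoint_left.mpr
    rintro y ⟨-, hy2⟩ ⟨hy3, -⟩
    have hle' : ((a : ℝ) + 1) ≤ (b : ℝ) := by exact_mod_cast hab
    have hle : ((((a : ℝ) + 1 : ℝ)) : EReal) ≤ (((b : ℝ)) : EReal) :=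
      EReal.coe_le_coe_iff.mpr hle'
    exact absurd (lt_of_lt_of_le hy2 (le_trans hle hy3)) (lt_irrefl _)
  rcases lt_or_gt_of_ne hmn with h | h
  · exact key m n (by omega)
  · exact (key n m (by omega)).symm

lemma iUnion_A : (⋃ n : ℤ, A n) = {y : EReal | y ≠ ⊥ ∧ y ≠ ⊤} := by
  ext y
  simp only [Set.mem_iUnion, Set.mem_setOf_eq]
  constructor
  · rintro ⟨n, h1, h2⟩
    refine ⟨?_, ?_⟩
    · rintro rfl
      exact absurd h1 (not_le.mpr (EReal.bot_lt_coe _))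
    · rintro rfl
      exact absurd h2 (not_lt.mpr le_top)
  · intro ⟨h1, h2⟩
    induction y using EReal.rec with
    | bot => exact absurd rfl h1
    | top => exact absurd rfl h2
    | coe r =>
        refine ⟨⌊r⌋, ?_, ?_⟩
        · exact EReal.coe_le_coe_iff.mpr (Int.floor_le r)
        · exact EReal.coe_lt_coe_iff.mpr (Int.lt_floor_add_one r)

lemma inv_measure_A_zero (ν : ProbabilityMeasure EReal) (hν : ν ∈ invMeas (⇑Sh)) (n : ℤ) :
    ν.toMeasure (A n) = 0 := by
  have hS : Measurable (⇑Sh) := Sh.continuous.measurable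
  have hstep : ∀ m : ℤ, ν.toMeasure (A (m + 1)) = ν.toMeasure (A m) := by
    intro m
    conv_lhs => rw [← hν]
    rw [Measure.map_apply hS (measurable_A _), Sh_preimage_A]
  have hconst : ∀ m : ℤ, ν.toMeasure (A m) = ν.toMeasure (A 0) := by
    intro m
    induction m using Int.induction_on with
    | zero => rfl
    | succ i ih => rw [hstep i, ih]
    | pred i ih => rw [← ih, ← hstep (-i - 1)]; norm_num
  have hsum : ∑' m : ℤ, ν.toMeasure (A m) ≤ 1 := by
    rw [← measure_iUnion disjoint_A measurable_A]
    exact le_trans (measure_mono (Set.subset_univ _)) (le_of_eq measure_univ)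
  by_contra hne
  have h0 : ν.toMeasure (A 0) ≠ 0 := by rw [← hconst n]; exact hne
  have : ∑' m : ℤ, ν.toMeasure (A m) = ⊤ := by
    calc ∑' m : ℤ, ν.toMeasure (A m) = ∑' _ : ℤ, ν.toMeasure (A 0) := by
          congr 1; exact funext hconst
      _ = ⊤ := ENNReal.tsum_const_eq_top_of_ne_zero h0
  rw [this] at hsum
  exact absurd hsum (by simp)

lemma ae_bot_or_top (ν : ProbabilityMeasure EReal) (hν : ν ∈ invMeas (⇑Sh)) :
    ∀ᵐ y ∂ν.toMeasure, y = ⊥ ∨ y = ⊤ := by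
  rw [ae_iff]
  have hset : {y : EReal | ¬(y = ⊥ ∨ y = ⊤)} = ⋃ n : ℤ, A n := by
    rw [iUnion_A]; ext y; simp [not_or]
  rw [hset, measure_iUnion disjoint_A measurable_A]
  simp [inv_measure_A_zero ν hν]

/-! ### alpha: the optimal coupling -/

def hB (y : EReal) : Bool := if y = ⊥ then true else false

lemma measurable_hB : Measurable hB := by
  unfold hB
  exact Measurable.ite (by simpa using (measurableSet_singleton (⊥ : EReal)))
    measurable_const measurable_const

def G : EReal → Bool × EReal := fun y => (hB y, y)

lemma measurable_G : Measurable G := measurable_hB.prodMk measurable_id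

lemma fF_G_bot_top {y : EReal} (h : y = ⊥ ∨ y = ⊤) : fF (G y) = -1 := by
  rcases h with rfl | rfl
  · simp [G, hB, fF, cB, g_bot]
  · simp [G, hB, fF, cB, g_top]

def lamOf (ν : ProbabilityMeasure EReal) : ProbabilityMeasure (Bool × EReal) :=
  ⟨ν.toMeasure.map G, Measure.isProbabilityMeasure_map measurable_G.aemeasurable⟩

lemma lamOf_invariant (ν : ProbabilityMeasure EReal) (hν : ν ∈ invMeas (⇑Sh)) :
    lamOf ν ∈ invMeas (Prod.map (⇑Th) (⇑Sh)) := by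
  show ((lamOf ν).toMeasure).map (Prod.map (⇑Th) (⇑Sh)) = (lamOf ν).toMeasure
  have hps : Measurable (Prod.map (⇑Th) (⇑Sh)) :=
    (Th.continuous.measurable).prodMap (Sh.continuous.measurable)
  show (ν.toMeasure.map G).map (Prod.map (⇑Th) (⇑Sh)) = ν.toMeasure.map G
  rw [Measure.map_map hps measurable_G]
  apply Measure.map_congr
  filter_upwards [ae_bot_or_top ν hν] with y hy
  have hTh : (⇑Th) (hB y) = hB y := rfl
  have hSy : Sh y = y := by rcases hy with rfl | rfl; exacts [Sh_bot, Sh_top]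
  show (Th (hB y), Sh y) = (hB y, y)
  rw [hTh, hSy]

lemma lamOf_marginal (ν : ProbabilityMeasure EReal) :
    (lamOf ν).toMeasure.map Prod.snd = ν.toMeasure := by
  show (ν.toMeasure.map G).map Prod.snd = ν.toMeasure
  rw [Measure.map_map measurable_snd measurable_G]
  have : (Prod.snd ∘ G) = id := rfl
  rw [this, Measure.map_id]

lemma lamOf_integral (ν : ProbabilityMeasure EReal) (hν : ν ∈ invMeas (⇑Sh)) :
    ∫ p, fF p ∂(lamOf ν).toMeasure = -1 := by
  show ∫ p, fF p ∂(ν.toMeasure.map G) = -1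
  rw [integral_map measurable_G.aemeasurable
    (fF_continuous.aestronglyMeasurable)]
  have : ∫ y, fF (G y) ∂ν.toMeasure = ∫ _, (-1 : ℝ) ∂ν.toMeasure := by
    apply integral_congr_ae
    filter_upwards [ae_bot_or_top ν hν] with y hy
    exact fF_G_bot_top hy
  rw [this, integral_const]
  simp

lemma integral_fF_ge (lam : ProbabilityMeasure (Bool × EReal)) :
    -1 ≤ ∫ p, fF p ∂lam.toMeasure := by
  have hint : Integrable fF lam.toMeasure := by
    refine Integrable.mono' (integrable_const 1) fF_continuous.aestronglyMeasurable ?_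
    exact Filter.Eventually.of_forall abs_fF_le_one
  calc (-1 : ℝ) = ∫ _, (-1 : ℝ) ∂lam.toMeasure := by rw [integral_const]; simp
    _ ≤ ∫ p, fF p ∂lam.toMeasure :=
        integral_mono (integrable_const _) hint neg_one_le_fF

lemma psi_eq (ν : ProbabilityMeasure EReal) (hν : ν ∈ invMeas (⇑Sh)) :
    psi2 (⇑Th) (⇑Sh) fF ν = -1 := by
  rw [psi2]
  have hmem : (-1 : ℝ) ∈ {r : ℝ | ∃ lam ∈ invMeas (Prod.map (⇑Th) (⇑Sh)),
      lam.toMeasure.map Prod.snd = ν.toMeasure ∧ r = ∫ p, fF p ∂lam.toMeasure} :=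
    ⟨lamOf ν, lamOf_invariant ν hν, lamOf_marginal ν, (lamOf_integral ν hν).symm⟩
  have hbd : ∀ r ∈ {r : ℝ | ∃ lam ∈ invMeas (Prod.map (⇑Th) (⇑Sh)),
      lam.toMeasure.map Prod.snd = ν.toMeasure ∧ r = ∫ p, fF p ∂lam.toMeasure}, -1 ≤ r := by
    rintro r ⟨lam, -, -, rfl⟩
    exact integral_fF_ge lam
  exact le_antisymm (csInf_le ⟨-1, hbd⟩ hmem) (le_csInf ⟨-1, hmem⟩ hbd)

def nuTop : ProbabilityMeasure EReal := ⟨Measure.dirac ⊤, Measure.dirac.isProbabilityMeasure⟩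

lemma nuTop_invariant : nuTop ∈ invMeas (⇑Sh) := by
  show (Measure.dirac (⊤ : EReal)).map (⇑Sh) = Measure.dirac ⊤
  rw [Measure.map_dirac' Sh.continuous.measurable, Sh_top]

lemma alpha_eq : alpha2 (⇑Th) (⇑Sh) fF = -1 := by
  rw [alpha2]
  have hset : {r : ℝ | ∃ ν ∈ invMeas (⇑Sh), r = psi2 (⇑Th) (⇑Sh) fF ν} = {(-1 : ℝ)} := by
    ext r
    simp only [Set.mem_setOf_eq, Set.mem_singleton_iff]
    constructor
    · rintro ⟨ν, hν, rfl⟩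
      exact psi_eq ν hν
    · rintro rfl
      exact ⟨nuTop, nuTop_invariant, (psi_eq nuTop nuTop_invariant).symm⟩
  rw [hset, csSup_singleton]

end Stmt5Aux

/-- there exist topological dynamical systems `(X, T)`, `(Y, S)` and a
continuous `f ∈ C(X × Y)` (with `π : X × Y → Y` the second-coordinate projection,
a factor map from `(X × Y, T × S)` to `(Y, S)`) such that
`α(f) = β(f) = γ(f) = −1` while `δ(f) = 0`; in particular
`α(f) = β(f) = γ(f) < δ(f)`. -/
theorem stmt5 :
    ∃ (𝒳 𝒴 : TDS) (f : 𝒳.carrier × 𝒴.carrier → ℝ),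
      Nonempty 𝒳.carrier ∧ Nonempty 𝒴.carrier ∧ Continuous f ∧
      alpha2 (⇑𝒳.homeo) (⇑𝒴.homeo) f = -1 ∧
      beta2 (⇑𝒳.homeo) (⇑𝒴.homeo) f = -1 ∧
      gamma2 (⇑𝒳.homeo) (⇑𝒴.homeo) f = -1 ∧
      delta2 (⇑𝒳.homeo) (⇑𝒴.homeo) f = 0 := by
  refine ⟨⟨Bool, Stmt5Aux.Th⟩, ⟨EReal, Stmt5Aux.Sh⟩, Stmt5Aux.fF,
    ⟨false⟩, ⟨⊥⟩, Stmt5Aux.fF_continuous, ?_, ?_, ?_, ?_⟩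
  · exact Stmt5Aux.alpha_eq
  · exact Stmt5Aux.beta_eq
  · exact Stmt5Aux.gamma_eq
  · exact Stmt5Aux.delta_eq
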